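/- Let X be a normal topological space. Define a binary relation ρ on the power set of X by A ρ B iff there exists a closed set F with A^Λ ⊆ F ⊆ F^Λ ⊆ B^V. Then ρ satisfies the interpolation property: whenever Aᵢ ρ Bⱼ for i ∈ {1,…,m}, j ∈ {1,…,n}, there exists a set C with Aᵢ ρ C and C ρ Bⱼ for all i, j. -/
import Mathlib


open Set

variable {X : Type*} [TopologicalSpace X]

/-- The kernel `A^Λ`: intersection of all open sets containing `A`. -/
def kernelSet (A : Set X) : Set X := ⋂₀ {O | IsOpen O ∧ A ⊆ O}

/-- The V-hull `A^V`: union of all closed sets contained in `A`. -/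
def vHull (A : Set X) : Set X := ⋃₀ {F | IsClosed F ∧ F ⊆ A}

/-- An F_σ set: a countable union of closed sets. -/
def IsFsigma (A : Set X) : Prop :=
  ∃ S : Set (Set X), S.Countable ∧ (∀ F ∈ S, IsClosed F) ∧ A = ⋃₀ S

/-- The relation `A ρ B` iff there is a closed set `F` with `A^Λ ⊆ F ⊆ F^Λ ⊆ B^V`. -/
def rhoNormal (A B : Set X) : Prop :=
  ∃ F : Set X, IsClosed F ∧ kernelSet A ⊆ F ∧ F ⊆ kernelSet F ∧ kernelSet F ⊆ vHull B

lemma subset_kernelSet (A : Set X) : A ⊆ kernelSet A := by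
  intro x hx O hO
  exact hO.2 hx

lemma kernelSet_subset_open {A O : Set X} (hO : IsOpen O) (h : A ⊆ O) :
    kernelSet A ⊆ O := fun _ hx => hx O ⟨hO, h⟩

lemma kernelSet_mono {A B : Set X} (h : A ⊆ B) : kernelSet A ⊆ kernelSet B := by
  intro x hx O hO
  exact hx O ⟨hO.1, h.trans hO.2⟩

lemma vHull_of_closed {C : Set X} (hC : IsClosed C) : vHull C = C := by
  apply Set.Subset.antisymm
  · intro x hx
    rcases hx with ⟨F, hF, hxF⟩
    exact hF.2 hxF
  · intro x hx
    exact ⟨C, ⟨hC, Subset.rfl⟩, hx⟩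

/-- In a normal space, the kernel of the closure of the kernel of a closed set
equals the kernel of the set. -/
lemma kernelSet_closure_kernelSet [NormalSpace X] {F : Set X} (hF : IsClosed F) :
    kernelSet (closure (kernelSet F)) ⊆ kernelSet F := by
  intro x hx O hO
  rcases hO with ⟨hOopen, hFO⟩
  obtain ⟨V, hVopen, hFV, hclV⟩ := normal_exists_closure_subset hF hOopen hFO
  have h1 : kernelSet F ⊆ V := kernelSet_subset_open hVopen hFV
  have h2 : closure (kernelSet F) ⊆ O := (closure_mono h1).trans hclV
  exact hx O ⟨hOopen, h2⟩

/-- The kernel of a finite union is contained in the union of kernels. -/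
lemma kernelSet_iUnion_subset {m : ℕ} (G : Fin m → Set X) :
    kernelSet (⋃ i, G i) ⊆ ⋃ i, kernelSet (G i) := by
  intro x hx
  by_contra hc
  simp only [mem_iUnion, not_exists] at hc
  have : ∀ i, ∃ O : Set X, IsOpen O ∧ G i ⊆ O ∧ x ∉ O := by
    intro i
    have := hc i
    rw [kernelSet, mem_sInter] at this
    push_neg at this
    obtain ⟨O, hO, hxO⟩ := this
    exact ⟨O, hO.1, hO.2, hxO⟩
  choose O hOopen hGO hxO using this
  have hmem : x ∈ ⋃ i, O i := by
    apply hx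
    exact ⟨isOpen_iUnion hOopen, iUnion_mono hGO⟩
  rcases mem_iUnion.mp hmem with ⟨i, hi⟩
  exact hxO i hi

theorem interpolation_normal
    [NormalSpace X]
    (m n : ℕ) (A : Fin m → Set X) (B : Fin n → Set X)
    (h : ∀ i j, rhoNormal (A i) (B j)) :
    ∃ C : Set X, (∀ i, rhoNormal (A i) C) ∧ (∀ j, rhoNormal C (B j)) := by
  choose F hFc hAF hFk hFB using h
  set G : Fin m → Set X := fun i => ⋂ j, F i j with hG
  set D : Set X := ⋃ i, G i with hD
  have hDc : IsClosed D := isClosed_iUnion_of_finite fun i => isClosed_iInter fun j => hFc i j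
  set C : Set X := closure (kernelSet D) with hC
  have hCc : IsClosed C := isClosed_closure
  have hkD : kernelSet D ⊆ ⋃ i, kernelSet (G i) := kernelSet_iUnion_subset G
  have hkCD : kernelSet C ⊆ kernelSet D := kernelSet_closure_kernelSet hDc
  refine ⟨C, ?_, ?_⟩
  · intro i
    refine ⟨D, hDc, ?_, subset_kernelSet D, ?_⟩
    · exact (subset_iInter fun j => hAF i j).trans (subset_iUnion G i)
    · rw [vHull_of_closed hCc]
      exact subset_closure
  · intro j
    refine ⟨C, hCc, hkCD.trans subset_closure, subset_kernelSet C, ?_⟩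
    refine hkCD.trans (hkD.trans ?_)
    apply iUnion_subset
    intro i
    exact (kernelSet_mono (iInter_subset _ j)).trans (hFB i j)
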